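/- arXiv:2401.12849 — 8 statements merged into one kernel-verified Lean document; each statement's English description precedes it below -/
import Mathlib

section
/- (Binary Bellman equation for the state value function.) For every policy π and every state s, the binary safety value function satisfies v^π(s) = i(s) + (1 − i(s)) · max_{s' ∈ F_1^π(s)} v^π(s'); that is, v^π(s) equals the maximum of i(s) and the maximum of v^π over the one-step successors of s under π. -/
open scoped Classical

variable {S A : Type*}

/-- `reach F π t s` : the `t`-step reachable set from state `s` under policy `π`
(a policy assigns to each state the set of allowed actions).
`F_0^π(s) = {s}` and `F_{t+1}^π(s) = { F(s', a) : s' ∈ F_t^π(s), a ∈ π(s') }`. -/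
def reach (F : S → A → S) (π : S → Set A) : ℕ → S → Set S
  | 0, s => {s}
  | t + 1, s => {s'' | ∃ s' ∈ reach F π t s, ∃ a ∈ π s', s'' = F s' a}

/-- `reachSA F π t s a` : the `t`-step reachable set from the state-action pair `(s, a)`:
`F_0^π(s,a) = {s}`, `F_1^π(s,a) = {F(s,a)}`, and for `t ≥ 1`,
`F_{t+1}^π(s,a) = { F(s', a') : s' ∈ F_t^π(s,a), a' ∈ π(s') }`. -/
def reachSA (F : S → A → S) (π : S → Set A) : ℕ → S → A → Set S
  | 0, s, _ => {s}
  | 1, s, a => {F s a}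
  | t + 2, s, a => {s'' | ∃ s' ∈ reachSA F π (t + 1) s a, ∃ a' ∈ π s', s'' = F s' a'}

/-- The insecurity function: `i(s) = 1` if `s ∈ G`, else `0`. -/
noncomputable def insec (G : Set S) (s : S) : ℕ := if s ∈ G then 1 else 0

/-- The binary safety value function of a policy:
`v^π(s) = 1` iff some reachable state from `s` lies in `G`. -/
noncomputable def vPol (F : S → A → S) (G : Set S) (π : S → Set A) (s : S) : ℕ :=
  if ∃ t : ℕ, ∃ s' ∈ reach F π t s, s' ∈ G then 1 else 0

/-- The binary safety action-value function of a policy: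
`b^π(s,a) = 1` iff some reachable state from `(s,a)` lies in `G`. -/
noncomputable def bPol (F : S → A → S) (G : Set S) (π : S → Set A) (s : S) (a : A) : ℕ :=
  if ∃ t : ℕ, ∃ s' ∈ reachSA F π t s a, s' ∈ G then 1 else 0

/-- The optimal binary value function `v^*(s) = inf_π v^π(s)`,
the infimum over all (nonempty-support) policies. -/
noncomputable def vStar (F : S → A → S) (G : Set S) (s : S) : ℕ :=
  ⨅ π : {π : S → Set A // ∀ x, (π x).Nonempty}, vPol F G π.1 s

/-- The optimal binary action-value function `b^*(s,a) = inf_π b^π(s,a)`. -/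
noncomputable def bStar (F : S → A → S) (G : Set S) (s : S) (a : A) : ℕ :=
  ⨅ π : {π : S → Set A // ∀ x, (π x).Nonempty}, bPol F G π.1 s a

/-- The binary Bellman operator:
`(T b)(s,a) = i(s) + (1 − i(s)) · min_{a'} b(F(s,a), a')`. -/
noncomputable def Tb (F : S → A → S) (G : Set S) (b : S → A → ℕ) : S → A → ℕ :=
  fun s a => insec G s + (1 - insec G s) * ⨅ a' : A, b (F s a) a'

lemma reach_succ_iff (F : S → A → S) (π : S → Set A) :
    ∀ (t : ℕ) (s x : S), x ∈ reach F π (t + 1) s ↔ ∃ a ∈ π s, x ∈ reach F π t (F s a) := by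
  intro t
  induction t with
  | zero =>
    intro s x
    simp [reach]
  | succ t ih =>
    intro s x
    constructor
    · rintro ⟨s', hs', a', ha', rfl⟩
      obtain ⟨a, ha, hs'2⟩ := (ih s s').mp hs'
      exact ⟨a, ha, s', hs'2, a', ha', rfl⟩
    · rintro ⟨a, ha, s', hs', a', ha', rfl⟩
      exact ⟨s', (ih s s').mpr ⟨a, ha, hs'⟩, a', ha', rfl⟩

lemma vPol_eq_one_iff (F : S → A → S) (G : Set S) (π : S → Set A) (s : S) :
    vPol F G π s = 1 ↔ ∃ t : ℕ, ∃ s' ∈ reach F π t s, s' ∈ G := by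
  unfold vPol; split <;> rename_i h <;> simp [h]

lemma vPol_le_one (F : S → A → S) (G : Set S) (π : S → Set A) (s : S) :
    vPol F G π s ≤ 1 := by
  unfold vPol; split <;> simp

/-- Binary Bellman equation for the state value function:
`v^π(s) = i(s) + (1 − i(s)) · max_{s' ∈ F_1^π(s)} v^π(s')`. -/
theorem binary_bellman_value (F : S → A → S) (G : Set S) (π : S → Set A)
    (hπ : ∀ x, (π x).Nonempty) (s : S) :
    vPol F G π s = insec G s + (1 - insec G s) * sSup (vPol F G π '' reach F π 1 s) := by
  obtain ⟨a0, ha0⟩ := hπ s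
  have hmem : F s a0 ∈ reach F π 1 s := ⟨s, rfl, a0, ha0, rfl⟩
  have hne : (vPol F G π '' reach F π 1 s).Nonempty := ⟨_, _, hmem, rfl⟩
  have hbdd : BddAbove (vPol F G π '' reach F π 1 s) := by
    refine ⟨1, ?_⟩
    rintro x ⟨s', _, rfl⟩
    exact vPol_le_one F G π s'
  by_cases hG : s ∈ G
  · have : vPol F G π s = 1 := (vPol_eq_one_iff F G π s).mpr ⟨0, s, rfl, hG⟩
    simp [this, insec, hG]
  · simp only [insec, if_neg hG, Nat.zero_add, Nat.sub_zero, one_mul]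
    by_cases hv : vPol F G π s = 1
    · rw [hv]
      obtain ⟨t, s', hs', hsG⟩ := (vPol_eq_one_iff F G π s).mp hv
      cases t with
      | zero => exact absurd (hs' ▸ hsG) (by simpa [reach] using hs' ▸ hG)
      | succ t =>
        obtain ⟨a, ha, hs'2⟩ := (reach_succ_iff F π t s s').mp hs'
        have h1 : vPol F G π (F s a) = 1 :=
          (vPol_eq_one_iff F G π (F s a)).mpr ⟨t, s', hs'2, hsG⟩
        have : (1 : ℕ) ∈ vPol F G π '' reach F π 1 s :=
          ⟨F s a, ⟨s, rfl, a, ha, rfl⟩, h1⟩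
        exact le_antisymm (le_csSup hbdd this)
          (csSup_le hne (by rintro x ⟨s', _, rfl⟩; exact vPol_le_one F G π s'))
    · have hv0 : vPol F G π s = 0 := by
        unfold vPol at hv ⊢; split <;> simp_all
      rw [hv0]
      refine (Nat.le_zero.mp (csSup_le hne ?_)).symm
      rintro x ⟨s', hs', rfl⟩
      obtain ⟨s1, hs1, a, ha, rfl⟩ := hs'
      obtain rfl : s = s1 := hs1.symm
      simp only [Nat.le_zero]
      unfold vPol
      rw [if_neg]
      rintro ⟨t, s'', hs'', hG'⟩
      exact hv ((vPol_eq_one_iff F G π s).mpr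
        ⟨t + 1, s'', (reach_succ_iff F π t s s'').mpr ⟨a, ha, hs''⟩, hG'⟩)
end

section
/- (Bellman optimality condition.) For every state s, the optimal binary value functions satisfy v^*(s) = min_{a ∈ A} b^*(s, a). -/
open scoped Classical

variable {S A : Type*}

section Aux

variable (F : S → A → S) (π : S → Set A)

lemma reach_mem_succ (t : ℕ) (s : S) (x : S) :
    x ∈ reach F π (t+1) s ↔ ∃ a ∈ π s, x ∈ reach F π t (F s a) := by
  induction t generalizing x with
  | zero =>
    constructor
    · rintro ⟨s', hs', a, ha, rfl⟩
      simp only [reach, Set.mem_singleton_iff] at hs'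
      subst hs'
      exact ⟨a, ha, rfl⟩
    · rintro ⟨a, ha, hx⟩
      simp only [reach, Set.mem_singleton_iff] at hx
      exact ⟨s, rfl, a, ha, hx⟩
  | succ t ih =>
    constructor
    · rintro ⟨s', hs', a', ha', rfl⟩
      obtain ⟨a, ha, hs'⟩ := ih s' |>.mp hs'
      exact ⟨a, ha, s', hs', a', ha', rfl⟩
    · rintro ⟨a, ha, s', hs', a', ha', rfl⟩
      exact ⟨s', (ih s').mpr ⟨a, ha, hs'⟩, a', ha', rfl⟩

lemma reachSA_eq (t : ℕ) (s : S) (a : A) :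
    reachSA F π (t+1) s a = reach F π t (F s a) := by
  induction t with
  | zero => rfl
  | succ t ih =>
    ext x
    constructor
    · rintro ⟨s', hs', a', ha', rfl⟩
      rw [ih] at hs'
      exact ⟨s', hs', a', ha', rfl⟩
    · rintro ⟨s', hs', a', ha', rfl⟩
      rw [← ih] at hs'
      exact ⟨s', hs', a', ha', rfl⟩

lemma nat_iInf_zero {ι : Sort*} [Nonempty ι] (f : ι → ℕ) :
    (⨅ i, f i) = 0 ↔ ∃ i, f i = 0 := by
  rw [iInf, Nat.sInf_eq_zero]
  constructor
  · rintro (h | h)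
    · obtain ⟨i, hi⟩ := h; exact ⟨i, hi⟩
    · exact absurd h (Set.range_nonempty f).ne_empty
  · rintro ⟨i, hi⟩; exact Or.inl ⟨i, hi⟩

lemma nat_iInf_le {ι : Sort*} (f : ι → ℕ) (i : ι) : (⨅ j, f j) ≤ f i :=
  Nat.sInf_le (Set.mem_range_self i)

end Aux

lemma key_iff [Nonempty A] (F : S → A → S) (G : Set S) (s : S) :
    (∃ π : {π : S → Set A // ∀ x, (π x).Nonempty}, vPol F G π.1 s = 0) ↔
    (∃ a : A, ∃ π : {π : S → Set A // ∀ x, (π x).Nonempty}, bPol F G π.1 s a = 0) := by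
  constructor
  · rintro ⟨π, hπ⟩
    simp only [vPol, ite_eq_right_iff, one_ne_zero, imp_false, not_exists] at hπ
    push_neg at hπ
    obtain ⟨a, ha⟩ := π.2 s
    refine ⟨a, π, ?_⟩
    simp only [bPol, ite_eq_right_iff, one_ne_zero, imp_false, not_exists]
    push_neg
    intro t s' hs' hG
    rcases t with _ | t
    · exact hπ 0 s' hs' hG
    · rw [reachSA_eq] at hs'
      exact hπ (t+1) s' ((reach_mem_succ F π.1 t s s').mpr ⟨a, ha, hs'⟩) hG
  · rintro ⟨a, π, hπ⟩
    simp only [bPol, ite_eq_right_iff, one_ne_zero, imp_false, not_exists] at hπ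
    push_neg at hπ
    have hsG : s ∉ G := fun h => hπ 0 s rfl h
    have hsafe : ∀ t s', s' ∈ reach F π.1 t (F s a) → s' ∉ G := by
      intro t s' hs' hG
      exact hπ (t+1) s' (by rwa [reachSA_eq]) hG
    refine ⟨⟨fun x => if x = s then {a} else π.1 x, ?_⟩, ?_⟩
    · intro x
      by_cases hx : x = s
      · simp [hx]
      · simpa [hx] using π.2 x
    · simp only [vPol, ite_eq_right_iff, one_ne_zero, imp_false, not_exists]
      push_neg
      set π' : S → Set A := fun x => if x = s then {a} else π.1 x with hπ'
      have main : ∀ t x, x ∈ reach F π' t s →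
          x = s ∨ ∃ t', x ∈ reach F π.1 t' (F s a) := by
        intro t
        induction t with
        | zero =>
          intro x hx
          simp only [reach, Set.mem_singleton_iff] at hx
          exact Or.inl hx
        | succ t ih =>
          rintro x ⟨s', hs', a', ha', rfl⟩
          rcases ih s' hs' with h | ⟨t', ht'⟩
          · subst h
            simp only [hπ', if_pos rfl, Set.mem_singleton_iff] at ha'
            subst ha'
            exact Or.inr ⟨0, rfl⟩
          · by_cases hss : s' = s
            · subst hss
              simp only [hπ', if_pos rfl, Set.mem_singleton_iff] at ha'
              subst ha'
              exact Or.inr ⟨0, rfl⟩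
            · simp only [hπ', if_neg hss] at ha'
              exact Or.inr ⟨t' + 1, s', ht', a', ha', rfl⟩
      intro t x hx hG
      rcases main t x hx with rfl | ⟨t', ht'⟩
      · exact hsG hG
      · exact hsafe t' x ht' hG

/-- Bellman optimality condition: for every state `s`,
`v^*(s) = min_{a ∈ A} b^*(s, a)`. -/
theorem bellman_optimality [Fintype A] [Nonempty A] (F : S → A → S) (G : Set S) (s : S) :
    vStar F G s = ⨅ a : A, bStar F G s a := by
  have npol : Nonempty {π : S → Set A // ∀ x, (π x).Nonempty} :=
    ⟨⟨fun _ => Set.univ, fun _ => Set.univ_nonempty⟩⟩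
  have hv1 : ∀ π : {π : S → Set A // ∀ x, (π x).Nonempty}, vPol F G π.1 s ≤ 1 := by
    intro π; unfold vPol; split <;> omega
  have hb1 : ∀ (a : A) (π : {π : S → Set A // ∀ x, (π x).Nonempty}),
      bPol F G π.1 s a ≤ 1 := by
    intro a π; unfold bPol; split <;> omega
  have hL : vStar F G s ≤ 1 :=
    le_trans (nat_iInf_le _ (Classical.arbitrary _)) (hv1 _)
  have hR : (⨅ a : A, bStar F G s a) ≤ 1 := by
    refine le_trans (nat_iInf_le _ (Classical.arbitrary A)) ?_
    exact le_trans (nat_iInf_le _ (Classical.arbitrary _)) (hb1 _ _)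
  have hzero : vStar F G s = 0 ↔ (⨅ a : A, bStar F G s a) = 0 := by
    rw [vStar, nat_iInf_zero, nat_iInf_zero]
    simp only [bStar, nat_iInf_zero]
    exact key_iff F G s
  omega
end

section
/- (Optimal binary Bellman equation.) For every state s and every action a, the optimal binary action-value function satisfies b^*(s, a) = i(s) + (1 − i(s)) · min_{a' ∈ A} b^*(s', a'), where s' = F(s, a); in other words, b^* is a fixed point of the binary Bellman operator T. -/
open scoped Classical

variable {S A : Type*}

lemma reachSA_succ (F : S → A → S) (π : S → Set A) (s : S) (a : A) :
    ∀ t, reachSA F π (t + 1) s a = reach F π t (F s a) := by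
  intro t
  induction t with
  | zero => rfl
  | succ t ih => simp only [reachSA, ih, reach]

lemma reach_subset_closed (F : S → A → S) (π : S → Set A) (X : Set S)
    (hX : ∀ x ∈ X, ∀ b ∈ π x, F x b ∈ X) {s : S} (hs : s ∈ X) :
    ∀ t, reach F π t s ⊆ X := by
  intro t
  induction t with
  | zero => intro x hx; rw [show x = s from hx]; exact hs
  | succ t ih =>
    rintro x ⟨s', hs', b, hb, rfl⟩
    exact hX s' (ih hs') b hb

lemma reach_step (F : S → A → S) (π : S → Set A) {s : S} {a : A} (ha : a ∈ π s) :
    ∀ t x, x ∈ reach F π t (F s a) → x ∈ reach F π (t + 1) s := by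
  intro t
  induction t with
  | zero => intro x hx; exact ⟨s, rfl, a, ha, hx⟩
  | succ t ih =>
    rintro x ⟨s', hs', a', ha', rfl⟩
    exact ⟨s', ih s' hs', a', ha', rfl⟩

lemma iInf_binary {ι : Sort*} [Nonempty ι] (f : ι → ℕ) (h : ∀ i, f i ≤ 1) :
    (⨅ i, f i) = if ∃ i, f i = 0 then 0 else 1 := by
  split_ifs with hex
  · obtain ⟨i, hi⟩ := hex
    exact Nat.le_zero.mp (hi ▸ ciInf_le (OrderBot.bddBelow _) i)
  · push_neg at hex
    have h1 : ∀ i, f i = 1 := fun i => le_antisymm (h i) (Nat.one_le_iff_ne_zero.mpr (hex i))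
    simp [h1]

/-- Optimal binary Bellman equation:
`b^*(s, a) = i(s) + (1 − i(s)) · min_{a'} b^*(F(s, a), a')`;
in other words, `b^*` is a fixed point of the binary Bellman operator `T`. -/
theorem optimal_binary_bellman [Fintype A] [Nonempty A] (F : S → A → S) (G : Set S) :
    (∀ (s : S) (a : A),
      bStar F G s a = insec G s + (1 - insec G s) * ⨅ a' : A, bStar F G (F s a) a') ∧
    Tb F G (bStar F G) = bStar F G := by
  have hne : Nonempty {π : S → Set A // ∀ x, (π x).Nonempty} :=
    ⟨⟨fun _ => Set.univ, fun _ => Set.univ_nonempty⟩⟩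
  have bPol_le : ∀ (π : S → Set A) (s : S) (a : A), bPol F G π s a ≤ 1 := by
    intro π s a; unfold bPol; split_ifs <;> simp
  have bPol_eq_zero : ∀ (π : S → Set A) (s : S) (a : A),
      bPol F G π s a = 0 ↔ ¬ ∃ t, ∃ s' ∈ reachSA F π t s a, s' ∈ G := by
    intro π s a; unfold bPol; split_ifs with h <;> simp [h]
  have bStar_eq : ∀ (s : S) (a : A), bStar F G s a =
      if ∃ π : {π : S → Set A // ∀ x, (π x).Nonempty}, bPol F G π.1 s a = 0 then 0 else 1 :=
    fun s a => iInf_binary _ (fun π => bPol_le π.1 s a)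
  have key : ∀ (s : S) (a : A),
      bStar F G s a = insec G s + (1 - insec G s) * ⨅ a' : A, bStar F G (F s a) a' := by
    intro s a
    by_cases hs : s ∈ G
    · have hno : ¬ ∃ π : {π : S → Set A // ∀ x, (π x).Nonempty}, bPol F G π.1 s a = 0 := by
        rintro ⟨π, hπ⟩
        rw [bPol_eq_zero] at hπ
        exact hπ ⟨0, s, rfl, hs⟩
      rw [bStar_eq, if_neg hno]
      simp [insec, hs]
    · set s' := F s a with hs'
      have hmin : (⨅ a' : A, bStar F G s' a') =
          if ∃ a' : A, ∃ π : {π : S → Set A // ∀ x, (π x).Nonempty},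
              bPol F G π.1 s' a' = 0 then 0 else 1 := by
        rw [iInf_binary (fun a' => bStar F G s' a')
          (fun a' => by show bStar F G s' a' ≤ 1; rw [bStar_eq]; split_ifs <;> simp)]
        have hQ : (∃ a' : A, bStar F G s' a' = 0) ↔
            ∃ a' : A, ∃ π : {π : S → Set A // ∀ x, (π x).Nonempty},
              bPol F G π.1 s' a' = 0 := by
          refine exists_congr fun a' => ?_
          rw [bStar_eq]
          split_ifs with h <;> simp [h]
        simp only [hQ]
      have hiff : (∃ π : {π : S → Set A // ∀ x, (π x).Nonempty}, bPol F G π.1 s a = 0) ↔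
          (∃ a' : A, ∃ π : {π : S → Set A // ∀ x, (π x).Nonempty},
            bPol F G π.1 s' a' = 0) := by
        constructor
        · rintro ⟨π, hπ⟩
          rw [bPol_eq_zero] at hπ
          push_neg at hπ
          obtain ⟨a', ha'⟩ := π.2 s'
          refine ⟨a', π, ?_⟩
          rw [bPol_eq_zero]
          rintro ⟨t, x, hx, hxG⟩
          match t with
          | 0 =>
            exact hπ 1 x (by simpa [reachSA] using hx) hxG
          | t + 1 =>
            rw [reachSA_succ] at hx
            have hx2 : x ∈ reach F π.1 (t + 1) s' := reach_step F π.1 ha' t x hx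
            rw [← reachSA_succ F π.1 s a (t + 1)] at hx2
            exact hπ (t + 2) x hx2 hxG
        · rintro ⟨a', π, hπ⟩
          rw [bPol_eq_zero] at hπ
          push_neg at hπ
          have hs'G : s' ∉ G := hπ 0 s' rfl
          set D : Set S := {x | ∃ t, x ∈ reach F π.1 t (F s' a')} with hD
          have hDG : ∀ x ∈ D, x ∉ G := by
            rintro x ⟨t, ht⟩
            exact hπ (t + 1) x (by rw [reachSA_succ]; exact ht)
          set π' : S → Set A := fun x => if x = s' then ({a'} : Set A) else π.1 x with hπ'
          have hπ'ne : ∀ x, (π' x).Nonempty := by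
            intro x
            simp only [hπ']
            split_ifs
            · exact Set.singleton_nonempty _
            · exact π.2 x
          set X : Set S := {s'} ∪ D with hX
          have hclosed : ∀ x ∈ X, ∀ b ∈ π' x, F x b ∈ X := by
            intro x hx b hb
            by_cases hxs : x = s'
            · have hb' : b = a' := by simpa [hπ', hxs] using hb
              subst hxs; subst hb'
              exact Or.inr ⟨0, rfl⟩
            · rcases hx with hx | ⟨t, ht⟩
              · exact absurd hx hxs
              · have hb' : b ∈ π.1 x := by simpa [hπ', hxs] using hb
                exact Or.inr ⟨t + 1, ⟨x, ht, b, hb', rfl⟩⟩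
          refine ⟨⟨π', hπ'ne⟩, ?_⟩
          rw [bPol_eq_zero]
          rintro ⟨t, x, hx, hxG⟩
          match t with
          | 0 => exact hs (by rwa [show x = s from hx] at hxG)
          | t + 1 =>
            rw [reachSA_succ] at hx
            have hxX : x ∈ X :=
              reach_subset_closed F π' X hclosed (Or.inl rfl) t hx
            rcases hxX with hxX | hxX
            · exact hs'G (hxX ▸ hxG)
            · exact hDG x hxX hxG
      rw [bStar_eq, hmin]
      simp only [insec, if_neg hs]
      rw [if_congr hiff rfl rfl]
      ring
  refine ⟨key, ?_⟩
  funext s a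
  rw [Tb, (key s a).symm]
end

section
/- (Theorem 1(i).) Let b̃ be a fixed point of the binary Bellman operator T that is not identically equal to 1. Then the associated safe set C(b̃) = { s ∈ S : min_{a ∈ A} b̃(s, a) = 0 } is a control invariant safe set: there exists a policy π such that for every s₀ ∈ C(b̃) and every t ≥ 0, F_t^π(s₀) ⊆ C(b̃) and F_t^π(s₀) ∩ G = ∅. -/
open scoped Classical

variable {S A : Type*}

/-- Theorem 1(i): if `b̃` is a fixed point of `T` not identically `1`,
then `C(b̃)` is control invariant safe: there exists a policy `π` such that for all
`s₀ ∈ C(b̃)` and `t ≥ 0`, `F_t^π(s₀) ⊆ C(b̃)` and `F_t^π(s₀) ∩ G = ∅`. -/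
theorem safe_set_is_CIS [Fintype A] [Nonempty A] (F : S → A → S) (G : Set S)
    (b : S → A → ℕ) (hb : ∀ s a, b s a = 0 ∨ b s a = 1) (hfix : Tb F G b = b)
    (hnt : b ≠ fun _ _ => 1) :
    ∃ π : S → Set A, (∀ x, (π x).Nonempty) ∧
      ∀ s₀ ∈ {x : S | (⨅ a : A, b x a) = 0}, ∀ t : ℕ,
        reach F π t s₀ ⊆ {x : S | (⨅ a : A, b x a) = 0} ∧ reach F π t s₀ ∩ G = ∅ := by
  classical
  -- inf = 0 iff some action has value 0
  have hinf : ∀ x : S, (⨅ a : A, b x a) = 0 ↔ ∃ a, b x a = 0 := by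
    intro x
    rw [iInf, Nat.sInf_eq_zero]
    simp
  -- states in C are not in G
  have hnotG : ∀ x : S, (⨅ a : A, b x a) = 0 → x ∉ G := by
    intro x hx hxG
    obtain ⟨a, ha⟩ := (hinf x).1 hx
    have := congrFun (congrFun hfix x) a
    rw [ha] at this
    simp [Tb, insec, hxG] at this
  -- successor stays in C when action value is 0
  have hsucc : ∀ x : S, ∀ a : A, (⨅ a : A, b x a) = 0 → b x a = 0 →
      (⨅ a' : A, b (F x a) a') = 0 := by
    intro x a hx ha
    have hxG := hnotG x hx
    have := congrFun (congrFun hfix x) a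
    rw [ha] at this
    simpa [Tb, insec, hxG] using this
  refine ⟨fun x => if h : ∃ a, b x a = 0 then {a | b x a = 0} else Set.univ, ?_, ?_⟩
  · intro x
    by_cases h : ∃ a, b x a = 0
    · obtain ⟨a, ha⟩ := h
      exact ⟨a, by simp [ha]⟩
    · simp [h]
  · intro s₀ hs₀ t
    have key : ∀ t : ℕ, reach F (fun x => if h : ∃ a, b x a = 0 then {a | b x a = 0}
        else Set.univ) t s₀ ⊆ {x : S | (⨅ a : A, b x a) = 0} := by
      intro t
      induction t with
      | zero => intro x hx; simp [reach] at hx; subst hx; exact hs₀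
      | succ n ih =>
        intro x hx
        obtain ⟨s', hs', a, ha, rfl⟩ := hx
        have hs'C : (⨅ a : A, b s' a) = 0 := ih hs'
        have hex : ∃ a, b s' a = 0 := (hinf s').1 hs'C
        simp only [dif_pos hex, Set.mem_setOf_eq] at ha
        exact hsucc s' a hs'C ha
    refine ⟨key t, ?_⟩
    ext x
    simp only [Set.mem_inter_iff, Set.mem_empty_iff_false, iff_false]
    rintro ⟨hx, hxG⟩
    exact hnotG x (key t hx) hxG
end

section
/- (Theorem 1(iii), invariance part.) Let b̃ be a fixed point of the binary Bellman operator T with associated safe set C = C(b̃), and let π be any policy such that for every s ∈ C and every action a, b̃(s, a) = 1 implies a ∉ π(s). Then C is invariant under π: for every s₀ ∈ C and every t ≥ 0, F_t^π(s₀) ⊆ C. -/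
open scoped Classical

variable {S A : Type*}

/-- Theorem 1(iii), invariance part: if `b̃` is a fixed point of `T`
and `π` is a policy that never takes an action `a` with `b̃(s, a) = 1` at states
`s ∈ C = C(b̃)`, then `C` is invariant under `π`. -/
theorem safe_policy_invariance [Fintype A] [Nonempty A] (F : S → A → S) (G : Set S)
    (b : S → A → ℕ) (hb : ∀ s a, b s a = 0 ∨ b s a = 1) (hfix : Tb F G b = b)
    (π : S → Set A) (hπ : ∀ x, (π x).Nonempty)
    (hsafe : ∀ s ∈ {x : S | (⨅ a : A, b x a) = 0}, ∀ a : A, b s a = 1 → a ∉ π s) :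
    ∀ s₀ ∈ {x : S | (⨅ a : A, b x a) = 0}, ∀ t : ℕ,
      reach F π t s₀ ⊆ {x : S | (⨅ a : A, b x a) = 0} := by
  intro s₀ hs₀ t
  -- key step lemma
  have key : ∀ s ∈ {x : S | (⨅ a : A, b x a) = 0}, ∀ a ∈ π s,
      F s a ∈ {x : S | (⨅ a : A, b x a) = 0} := by
    intro s hs a ha
    have hba : b s a = 0 := by
      rcases hb s a with h | h
      · exact h
      · exact absurd ha (hsafe s hs a h)
    have := congrFun (congrFun hfix s) a
    rw [hba] at this
    unfold Tb at this
    have hins : insec G s = 0 := by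
      unfold insec at this ⊢
      by_cases h : s ∈ G <;> simp [h] at this ⊢
    rw [hins] at this
    simpa using this
  induction t with
  | zero => intro x hx; simp only [reach] at hx; subst hx; exact hs₀
  | succ t ih =>
    intro x hx
    obtain ⟨s', hs', a, ha, rfl⟩ := hx
    exact key s' (ih hs') a ha
end

section
/- (Theorem 1(iii), safety part.) Let b̃ be a fixed point of the binary Bellman operator T with associated safe set C = C(b̃), and let π be any policy such that for every s ∈ C and every action a, b̃(s, a) = 1 implies a ∉ π(s). Then trajectories under π starting in C never reach the failure set: for every s₀ ∈ C and every t ≥ 0, F_t^π(s₀) ∩ G = ∅. -/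
open scoped Classical

variable {S A : Type*}

/-- Theorem 1(iii), safety part: if `b̃` is a fixed point of `T`
and `π` is a policy that never takes an action `a` with `b̃(s, a) = 1` at states
`s ∈ C = C(b̃)`, then trajectories under `π` starting in `C` never reach `G`. -/
theorem safe_policy_safety [Fintype A] [Nonempty A] (F : S → A → S) (G : Set S)
    (b : S → A → ℕ) (hb : ∀ s a, b s a = 0 ∨ b s a = 1) (hfix : Tb F G b = b)
    (π : S → Set A) (hπ : ∀ x, (π x).Nonempty)
    (hsafe : ∀ s ∈ {x : S | (⨅ a : A, b x a) = 0}, ∀ a : A, b s a = 1 → a ∉ π s) :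
    ∀ s₀ ∈ {x : S | (⨅ a : A, b x a) = 0}, ∀ t : ℕ,
      reach F π t s₀ ∩ G = ∅ := by
  intro s₀ hs₀ t
  -- key facts
  have hnotG : ∀ s : S, (⨅ a : A, b s a) = 0 → s ∉ G := by
    intro s hs hsG
    have h1 : ∀ a : A, b s a = 1 := by
      intro a
      have := congrFun (congrFun hfix s) a
      simp [Tb, insec, hsG] at this
      omega
    have : (⨅ a : A, b s a) = 1 := by
      simp [h1]
    omega
  have hstep : ∀ s : S, (⨅ a : A, b s a) = 0 → ∀ a ∈ π s,
      (⨅ a' : A, b (F s a) a') = 0 := by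
    intro s hs a ha
    have hba : b s a = 0 := by
      rcases hb s a with h | h
      · exact h
      · exact absurd ha (hsafe s hs a h)
    have hG := hnotG s hs
    have := congrFun (congrFun hfix s) a
    simp [Tb, insec, hG] at this
    omega
  have hreach : ∀ t : ℕ, ∀ s' ∈ reach F π t s₀, (⨅ a : A, b s' a) = 0 := by
    intro t
    induction t with
    | zero => intro s' hs'; simp [reach] at hs'; subst hs'; exact hs₀
    | succ n ih =>
      intro s' hs'
      obtain ⟨s'', hs'', a, ha, rfl⟩ := hs'
      exact hstep s'' (ih s'' hs'') a ha
  ext s'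
  simp only [Set.mem_inter_iff, Set.mem_empty_iff_false, iff_false, not_and]
  intro hs' hsG
  exact hnotG s' (hreach t s' hs') hsG
end

section
/- (Theorem 1(ii): the safe set is unreachable from outside.) Let b̃ be a fixed point of the binary Bellman operator T with associated safe set C = C(b̃). For every G-avoiding path s₀, s₁, …, s_T (i.e., s_{k+1} = F(s_k, a_k) for some actions a_k for all k < T, and s_k ∉ G for all k < T), if s₀ ∉ C then s_T ∉ C. In particular, for any policy, no trajectory that starts outside C and has not entered the failure set G can reach C. -/
open scoped Classical

variable {S A : Type*}

/-- Theorem 1(ii): the safe set of a fixed point of `T` is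
unreachable from outside along `G`-avoiding paths: if `s_{k+1} = F(s_k, a_k)`
and `s_k ∉ G` for all `k < T`, and `s₀ ∉ C(b̃)`, then `s_T ∉ C(b̃)`. -/
theorem safe_set_unreachable_from_outside [Fintype A] [Nonempty A]
    (F : S → A → S) (G : Set S)
    (b : S → A → ℕ) (hb : ∀ s a, b s a = 0 ∨ b s a = 1) (hfix : Tb F G b = b)
    (T : ℕ) (s : ℕ → S) (act : ℕ → A)
    (hpath : ∀ k < T, s (k + 1) = F (s k) (act k))
    (havoid : ∀ k < T, s k ∉ G)
    (h0 : s 0 ∉ {x : S | (⨅ a : A, b x a) = 0}) :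
    s T ∉ {x : S | (⨅ a : A, b x a) = 0} := by
  induction T with
  | zero => exact h0
  | succ n ih =>
    have hn : s n ∉ {x : S | (⨅ a : A, b x a) = 0} :=
      ih (fun k hk => hpath k (Nat.lt_succ_of_lt hk))
        (fun k hk => havoid k (Nat.lt_succ_of_lt hk))
    intro hmem
    apply hn
    have hstep := hpath n (Nat.lt_succ_self n)
    have hG : s n ∉ G := havoid n (Nat.lt_succ_self n)
    have hfix' : b (s n) (act n) = ⨅ a' : A, b (s (n+1)) a' := by
      have := congrFun (congrFun hfix (s n)) (act n)
      simp [Tb, insec, hG, hstep] at this ⊢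
      omega
    have hle : (⨅ a : A, b (s n) a) ≤ b (s n) (act n) :=
      Nat.sInf_le (Set.mem_range_self (act n))
    simp only [Set.mem_setOf_eq] at hmem ⊢
    omega
end

section
/- (Corollary 1: maximality of safe sets of fixed points.) Let X ⊆ S be a set such that there exist a state s₀ ∉ X and a G-avoiding path from s₀ whose final state lies in X. Then X is not the associated safe set of any fixed point of the binary Bellman operator T; that is, for every fixed point b̃ of T, X ≠ { s ∈ S : min_{a ∈ A} b̃(s, a) = 0 }. -/
open scoped Classical

variable {S A : Type*}

/-- Corollary 1, maximality: if some `G`-avoiding path starts at a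
state `s₀ ∉ X` and ends in `X`, then `X` is not the associated safe set of any
fixed point of the binary Bellman operator `T`. -/
theorem not_safe_set_of_reachable [Fintype A] [Nonempty A]
    (F : S → A → S) (G : Set S) (X : Set S)
    (hreach : ∃ (T : ℕ) (s : ℕ → S) (act : ℕ → A),
      s 0 ∉ X ∧ (∀ k < T, s (k + 1) = F (s k) (act k)) ∧
      (∀ k < T, s k ∉ G) ∧ s T ∈ X)
    (b : S → A → ℕ) (hb : ∀ s a, b s a = 0 ∨ b s a = 1) (hfix : Tb F G b = b) :
    X ≠ {s : S | (⨅ a : A, b s a) = 0} := by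
  intro hX
  obtain ⟨T, s, act, h0, hstep, havoid, hT⟩ := hreach
  have key : ∀ j k, k + j = T → s k ∈ X := by
    intro j
    induction j with
    | zero =>
      intro k hk
      have hkT : k = T := by omega
      rwa [hkT]
    | succ n ih =>
      intro k hk
      have hnext := ih (k + 1) (by omega)
      have hkT : k < T := by omega
      have hinf : (⨅ a : A, b (s (k + 1)) a) = 0 := by
        have := hX ▸ hnext
        simpa using this
      have hbk : b (s k) (act k) = 0 := by
        have hfk := congrFun (congrFun hfix (s k)) (act k)
        rw [← hfk]
        simp [Tb, insec, havoid k hkT, ← hstep k hkT, hinf]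
      have h1 : (⨅ a : A, b (s k) a) ≤ b (s k) (act k) :=
        ciInf_le (OrderBot.bddBelow _) _
      rw [hX]
      simp only [Set.mem_setOf_eq]
      omega
  exact h0 (key T 0 (by omega))
end
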